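/- arXiv:1203.4688 — 4 statements merged into one kernel-verified Lean document; each statement's English description precedes it below -/
import Mathlib

section
/- If U and V are m-dimensional linear subspaces of R^n with orthonormal bases (e_1,...,e_m) and (f_1,...,f_m) respectively such that |e_i - f_i| ≤ ϑ for all i, then the distance of orthogonal projections satisfies ‖π_U − π_V‖ ≤ 2mϑ. -/
open MeasureTheory Metric Set
open scoped ENNReal RealInnerProductSpace

noncomputable section

abbrev E (n : ℕ) := EuclideanSpace ℝ (Fin n)

noncomputable def proj {n : ℕ} (U : Submodule ℝ (E n)) : E n →L[ℝ] E n :=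
  U.subtypeL.comp (U.orthogonalProjection)

lemma proj_eq_sum {n m : ℕ} (U : Submodule ℝ (E n)) (e : Fin m → E n)
    (he : Orthonormal ℝ e) (heU : Submodule.span ℝ (Set.range e) = U) (x : E n) :
    proj U x = ∑ i, ⟪e i, x⟫ • e i := by
  have hmem : ∀ i, e i ∈ U := fun i => heU ▸ Submodule.subset_span ⟨i, rfl⟩
  set v : Fin m → U := fun i => ⟨e i, hmem i⟩ with hv
  have hon : Orthonormal ℝ v := by
    rw [orthonormal_iff_ite] at he ⊢
    intro i j; exact he i j
  have hsp : ⊤ ≤ Submodule.span ℝ (Set.range v) := by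
    intro u _
    have : (u : E n) ∈ Submodule.span ℝ (Set.range e) := heU ▸ u.2
    have hrange : Submodule.span ℝ (Set.range e) = Submodule.map U.subtype (Submodule.span ℝ (Set.range v)) := by
      rw [← Submodule.span_image]
      congr 1
      ext y; constructor
      · rintro ⟨i, rfl⟩; exact ⟨v i, ⟨i, rfl⟩, rfl⟩
      · rintro ⟨w, ⟨i, rfl⟩, rfl⟩; exact ⟨i, rfl⟩
    rw [hrange] at this
    obtain ⟨w, hw, hwu⟩ := this
    have : w = u := Subtype.ext hwu
    exact this ▸ hw
  let b := OrthonormalBasis.mk hon hsp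
  have hb : ∀ i, (b i : E n) = e i := fun i => by
    simp [b, OrthonormalBasis.coe_mk, v]
  have := b.orthogonalProjectionOnto_apply_eq_sum x
  have h2 : proj U x = ((U.orthogonalProjectionOnto x : U) : E n) := rfl
  rw [h2, this]
  push_cast
  simp_rw [hb]

/-- If `U` and `V` are `m`-dimensional subspaces of ℝⁿ with orthonormal bases
`e` and `f` such that `‖e i - f i‖ ≤ ϑ` for all `i`, then `‖π_U - π_V‖ ≤ 2 m ϑ`. -/
theorem grassmann_close_bases (n m : ℕ) (ϑ : ℝ)
    (U V : Submodule ℝ (E n)) (e f : Fin m → E n)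
    (he : Orthonormal ℝ e) (hf : Orthonormal ℝ f)
    (heU : Submodule.span ℝ (Set.range e) = U)
    (hfV : Submodule.span ℝ (Set.range f) = V)
    (hef : ∀ i, ‖e i - f i‖ ≤ ϑ) :
    ‖proj U - proj V‖ ≤ 2 * m * ϑ := by
  rcases Nat.eq_zero_or_pos m with hm | hm
  · subst hm
    have hU : U = ⊥ := by
      rw [← heU]; simp [Set.range_eq_empty]
    have hV : V = ⊥ := by
      rw [← hfV]; simp [Set.range_eq_empty]
    subst hU; subst hV
    rw [sub_self, norm_zero]; norm_num
  have hϑ : 0 ≤ ϑ := le_trans (norm_nonneg _) (hef ⟨0, hm⟩)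
  have hC : 0 ≤ 2 * m * ϑ := by positivity
  apply ContinuousLinearMap.opNorm_le_bound _ hC
  intro x
  rw [ContinuousLinearMap.sub_apply, proj_eq_sum U e he heU x, proj_eq_sum V f hf hfV x,
    ← Finset.sum_sub_distrib]
  calc ‖∑ i, (⟪e i, x⟫ • e i - ⟪f i, x⟫ • f i)‖
      ≤ ∑ i, ‖⟪e i, x⟫ • e i - ⟪f i, x⟫ • f i‖ := norm_sum_le _ _
    _ ≤ ∑ _i : Fin m, 2 * ϑ * ‖x‖ := by
        apply Finset.sum_le_sum
        intro i _
        have key : ⟪e i, x⟫ • e i - ⟪f i, x⟫ • f i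
            = ⟪e i - f i, x⟫ • e i + ⟪f i, x⟫ • (e i - f i) := by
          rw [inner_sub_left, sub_smul, smul_sub]; abel
        rw [key]
        have h1 : ‖⟪e i - f i, x⟫ • e i‖ ≤ ϑ * ‖x‖ := by
          rw [norm_smul, he.1 i, mul_one]
          calc ‖⟪e i - f i, x⟫‖ ≤ ‖e i - f i‖ * ‖x‖ := norm_inner_le_norm _ _
            _ ≤ ϑ * ‖x‖ := by gcongr; exact hef i
        have h2 : ‖⟪f i, x⟫ • (e i - f i)‖ ≤ ϑ * ‖x‖ := by
          rw [norm_smul]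
          calc ‖⟪f i, x⟫‖ * ‖e i - f i‖ ≤ (‖f i‖ * ‖x‖) * ϑ := by
                gcongr
                · exact norm_inner_le_norm _ _
                · exact hef i
            _ = ϑ * ‖x‖ := by rw [hf.1 i]; ring
        calc ‖_ + _‖ ≤ ϑ * ‖x‖ + ϑ * ‖x‖ := le_trans (norm_add_le _ _) (add_le_add h1 h2)
          _ = 2 * ϑ * ‖x‖ := by ring
    _ = 2 * m * ϑ * ‖x‖ := by
        rw [Finset.sum_const, Finset.card_univ, Fintype.card_fin, nsmul_eq_mul]; ring

end
end

section
/- Let ρ > 0, ε ∈ (0,1/2), δ ∈ (0,1), and let (v_1,...,v_m) be a basis of an m-dimensional subspace V of R^n satisfying (1−ε)ρ ≤ |v_i| ≤ (1+ε)ρ for all i and |⟨v_i, v_j⟩| ≤ δρ² for i ≠ j. Then there exists a constant C₂ depending only on m and an orthogonal basis (v̂_1,...,v̂_m) of V with |v̂_i| = ρ for all i and ⟨v̂_i, v̂_j⟩ = 0 for i ≠ j, such that |v_i − v̂_i| ≤ (ε + C₂δ)ρ for all i. -/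
open MeasureTheory Metric Set
open scoped ENNReal

noncomputable section

private lemma span_smul_eq' {n : ℕ} {ι : Type*} (f : ι → E n) (c : ι → ℝ)
    (hc : ∀ i, c i ≠ 0) :
    Submodule.span ℝ (Set.range fun i => c i • f i) = Submodule.span ℝ (Set.range f) := by
  apply le_antisymm <;> rw [Submodule.span_le] <;> rintro _ ⟨i, rfl⟩
  · exact Submodule.smul_mem _ _ (Submodule.subset_span ⟨i, rfl⟩)
  · have h : f i = (c i)⁻¹ • (c i • f i) := by
      rw [smul_smul, inv_mul_cancel₀ (hc i), one_smul]
    rw [h]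
    exact Submodule.smul_mem _ _ (Submodule.subset_span ⟨i, rfl⟩)

set_option maxHeartbeats 4000000 in
/-- Gram–Schmidt type reduction for `(ρ,ε,δ)`-bases: for every `m` there is a constant
`C₂ = C₂(m)` such that for every `(ρ,ε,δ)`-basis `v` of an `m`-dimensional subspace
`V ⊂ ℝⁿ` (with `ε ∈ (0,1/2)`, `δ ∈ (0,1)`) there is an ortho-`ρ`-normal basis `v̂` of `V`
with `‖v i − v̂ i‖ ≤ (ε + C₂ δ) ρ` for all `i`. -/
theorem gram_schmidt_reduction (m : ℕ) :
    ∃ C₂ : ℝ, 0 < C₂ ∧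
      ∀ (n : ℕ) (ρ ε δ : ℝ), 0 < ρ → ε ∈ Set.Ioo (0:ℝ) (1/2) → δ ∈ Set.Ioo (0:ℝ) 1 →
        ∀ (V : Submodule ℝ (E n)) (v : Fin m → E n),
          LinearIndependent ℝ v →
          Submodule.span ℝ (Set.range v) = V →
          (∀ i, (1 - ε) * ρ ≤ ‖v i‖ ∧ ‖v i‖ ≤ (1 + ε) * ρ) →
          (∀ i j, i ≠ j → |(inner ℝ (v i) (v j) : ℝ)| ≤ δ * ρ ^ 2) →
          ∃ vh : Fin m → E n,
            (∀ i, ‖vh i‖ = ρ) ∧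
            (∀ i j, i ≠ j → (inner ℝ (vh i) (vh j) : ℝ) = 0) ∧
            Submodule.span ℝ (Set.range vh) = V ∧
            ∀ i, ‖v i - vh i‖ ≤ (ε + C₂ * δ) * ρ := by
  classical
  haveI : WellFoundedLT (Fin m) := inferInstance
  set B : ℝ := 1000 * (m + 1) with hBdef
  have hm0 : (0:ℝ) ≤ (m:ℝ) := Nat.cast_nonneg m
  have hB1000 : (1000:ℝ) ≤ B := by rw [hBdef]; nlinarith
  have hB1 : (1:ℝ) ≤ B := by linarith
  have hK1 : (1:ℝ) ≤ B ^ m := one_le_pow₀ hB1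
  refine ⟨10 * B ^ m, by positivity, ?_⟩
  intro n ρ ε δ hρ hε hδ V v hli hspan hnorm hinner
  obtain ⟨hε0, hε2⟩ := hε
  obtain ⟨hδ0, hδ1⟩ := hδ
  by_cases hcase : δ * (4 * B ^ m) ≤ 1
  · -- small δ: quantitative Gram–Schmidt
    obtain ⟨u, hu⟩ : ∃ u : Fin m → E n, u = InnerProductSpace.gramSchmidt ℝ v := ⟨_, rfl⟩
    have hune : ∀ i, u i ≠ 0 := by rw [hu]; exact fun i => InnerProductSpace.gramSchmidt_ne_zero i hli
    have horth : ∀ i j : Fin m, i ≠ j → (inner ℝ (u i) (u j) : ℝ) = 0 := by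
      rw [hu]; exact fun i j hij => InnerProductSpace.gramSchmidt_orthogonal ℝ v hij
    have hspanu : Submodule.span ℝ (Set.range u) = Submodule.span ℝ (Set.range v) := by
      rw [hu]; exact InnerProductSpace.span_gramSchmidt ℝ v
    have hdef : ∀ i : Fin m, u i - v i
        = -∑ j ∈ Finset.Iio i, ((inner ℝ (u j) (v i) : ℝ) / ‖u j‖ ^ 2) • u j := by
      rw [hu]
      intro i
      have h := InnerProductSpace.gramSchmidt_def'' ℝ v i
      simp only [RCLike.ofReal_real_eq_id, id_eq] at h
      have h2 : v i - InnerProductSpace.gramSchmidt ℝ v i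
          = ∑ j ∈ Finset.Iio i, ((inner ℝ (InnerProductSpace.gramSchmidt ℝ v j) (v i) : ℝ)
            / ‖InnerProductSpace.gramSchmidt ℝ v j‖ ^ 2) • InnerProductSpace.gramSchmidt ℝ v j :=
        sub_eq_iff_eq_add'.mpr h
      rw [← neg_sub (v i) (InnerProductSpace.gramSchmidt ℝ v i), h2]
    clear hu
    have hBmδ : B ^ m * δ * ρ ≤ ρ / 4 := by nlinarith
    have key : ∀ N, ∀ i : Fin m, i.1 < N → ‖u i - v i‖ ≤ B ^ (i.1 + 1) * δ * ρ := by
      intro N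
      induction N with
      | zero => exact fun i hi => absurd hi (Nat.not_lt_zero _)
      | succ N IH =>
        intro i hi
        rcases Nat.lt_or_ge i.1 N with h | h
        · exact IH i h
        rw [hdef i, norm_neg]
        have hterm : ∀ j ∈ Finset.Iio i,
            ‖((inner ℝ (u j) (v i) : ℝ) / ‖u j‖ ^ 2) • u j‖ ≤ 8 * B ^ i.1 * δ * ρ := by
          intro j hj
          have hji : j < i := Finset.mem_Iio.1 hj
          have hjival : j.1 < i.1 := hji
          have hjN : j.1 < N := by omega
          have hIHj := IH j hjN
          have hjm : j.1 + 1 ≤ m := by omega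
          have hpow1 : B ^ (j.1 + 1) ≤ B ^ m := pow_le_pow_right₀ hB1 hjm
          have hpow2 : B ^ (j.1 + 1) ≤ B ^ i.1 := pow_le_pow_right₀ hB1 (by omega)
          have hpowpos : (0:ℝ) < B ^ (j.1 + 1) := by positivity
          have hpow1' : (1:ℝ) ≤ B ^ (j.1 + 1) := one_le_pow₀ hB1
          have hj2 : ‖u j - v j‖ ≤ ρ / 4 := by nlinarith
          obtain ⟨hvjlo, hvjhi⟩ := hnorm j
          obtain ⟨hvilo, hvihi⟩ := hnorm i
          have habs := abs_norm_sub_norm_le (u j) (v j)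
          have habs' := abs_le.1 (habs.trans hj2)
          have hlo : ρ / 4 ≤ ‖u j‖ := by nlinarith
          have hip : |(inner ℝ (u j) (v i) : ℝ)| ≤ 2 * B ^ (j.1 + 1) * δ * ρ ^ 2 := by
            have hsplit : (inner ℝ (u j) (v i) : ℝ)
                = (inner ℝ (v j) (v i) : ℝ) + (inner ℝ (u j - v j) (v i) : ℝ) := by
              rw [inner_sub_left]; ring
            have h1 : |(inner ℝ (v j) (v i) : ℝ)| ≤ δ * ρ ^ 2 := hinner j i (ne_of_lt hji)
            have h2 : |(inner ℝ (u j - v j) (v i) : ℝ)| ≤ ‖u j - v j‖ * ‖v i‖ :=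
              abs_real_inner_le_norm _ _
            have h3 : ‖u j - v j‖ * ‖v i‖ ≤ (B ^ (j.1 + 1) * δ * ρ) * ((1 + ε) * ρ) := by
              apply mul_le_mul hIHj hvihi (norm_nonneg _) (by positivity)
            have hP2 : (2:ℝ) ≤ B ^ (j.1 + 1) := by
              calc (2:ℝ) ≤ B := by linarith
                _ ≤ B ^ (j.1 + 1) := le_self_pow₀ hB1 (by omega)
            have key2 : 1 + ε * B ^ (j.1 + 1) ≤ B ^ (j.1 + 1) := by
              nlinarith [mul_nonneg (by linarith : (0:ℝ) ≤ 1/2 - ε)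
                (by positivity : (0:ℝ) ≤ B ^ (j.1 + 1))]
            have key3 := mul_le_mul_of_nonneg_right key2
              (by positivity : (0:ℝ) ≤ δ * ρ ^ 2)
            rw [hsplit]
            calc |(inner ℝ (v j) (v i) : ℝ) + (inner ℝ (u j - v j) (v i) : ℝ)|
                ≤ |(inner ℝ (v j) (v i) : ℝ)| + |(inner ℝ (u j - v j) (v i) : ℝ)| := abs_add_le _ _
              _ ≤ 2 * B ^ (j.1 + 1) * δ * ρ ^ 2 := by nlinarith [key3, h1, h2, h3]
          rw [norm_smul, Real.norm_eq_abs]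
          have hnormuj : (0:ℝ) < ‖u j‖ := lt_of_lt_of_le (by positivity) hlo
          have : |(inner ℝ (u j) (v i) : ℝ) / ‖u j‖ ^ 2| * ‖u j‖
              = |(inner ℝ (u j) (v i) : ℝ)| / ‖u j‖ := by
            rw [abs_div, abs_of_nonneg (by positivity : (0:ℝ) ≤ ‖u j‖ ^ 2)]
            field_simp
          rw [this]
          rw [div_le_iff₀ hnormuj]
          have h8 : 2 * B ^ (j.1 + 1) * δ * ρ ^ 2 ≤ (8 * B ^ i.1 * δ * ρ) * (ρ / 4) := by
            nlinarith [mul_le_mul_of_nonneg_right hpow2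
              (by positivity : (0:ℝ) ≤ δ * ρ ^ 2)]
          calc |(inner ℝ (u j) (v i) : ℝ)| ≤ 2 * B ^ (j.1 + 1) * δ * ρ ^ 2 := hip
            _ ≤ (8 * B ^ i.1 * δ * ρ) * (ρ / 4) := h8
            _ ≤ (8 * B ^ i.1 * δ * ρ) * ‖u j‖ := by
                apply mul_le_mul_of_nonneg_left hlo (by positivity)
        calc ‖∑ j ∈ Finset.Iio i, ((inner ℝ (u j) (v i) : ℝ) / ‖u j‖ ^ 2) • u j‖
            ≤ ∑ j ∈ Finset.Iio i, ‖((inner ℝ (u j) (v i) : ℝ) / ‖u j‖ ^ 2) • u j‖ :=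
              norm_sum_le _ _
          _ ≤ ∑ _j ∈ Finset.Iio i, (8 * B ^ i.1 * δ * ρ) := Finset.sum_le_sum hterm
          _ = (Finset.Iio i).card * (8 * B ^ i.1 * δ * ρ) := by
              rw [Finset.sum_const, nsmul_eq_mul]
          _ ≤ (m:ℝ) * (8 * B ^ i.1 * δ * ρ) := by
              apply mul_le_mul_of_nonneg_right _ (by positivity)
              have : (Finset.Iio i).card ≤ m := by
                calc (Finset.Iio i).card ≤ (Finset.univ : Finset (Fin m)).card :=
                      Finset.card_le_univ _
                  _ = m := Finset.card_fin m
              exact_mod_cast this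
          _ ≤ B ^ (i.1 + 1) * δ * ρ := by
              rw [pow_succ]
              have h8m : 8 * (m:ℝ) ≤ B := by rw [hBdef]; nlinarith
              nlinarith [mul_le_mul_of_nonneg_right h8m
                (by positivity : (0:ℝ) ≤ B ^ i.1 * δ * ρ)]
    have hclose : ∀ i : Fin m, ‖u i - v i‖ ≤ B ^ m * δ * ρ := by
      intro i
      have := key m i i.2
      have hpow : B ^ (i.1 + 1) ≤ B ^ m := pow_le_pow_right₀ hB1 i.2
      nlinarith [mul_le_mul_of_nonneg_right hpow (by positivity : (0:ℝ) ≤ δ * ρ)]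
    have hlo : ∀ i : Fin m, ρ / 4 ≤ ‖u i‖ := by
      intro i
      obtain ⟨hvlo, hvhi⟩ := hnorm i
      have habs' := abs_le.1 ((abs_norm_sub_norm_le (u i) (v i)).trans
        ((hclose i).trans hBmδ))
      nlinarith
    have hupos : ∀ i : Fin m, (0:ℝ) < ‖u i‖ := fun i => lt_of_lt_of_le (by positivity) (hlo i)
    refine ⟨fun i => (ρ / ‖u i‖) • u i, ?_, ?_, ?_, ?_⟩
    · intro i
      rw [norm_smul, Real.norm_eq_abs, abs_of_nonneg (by positivity : (0:ℝ) ≤ ρ / ‖u i‖),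
        div_mul_cancel₀ _ (hupos i).ne']
    · intro i j hij
      rw [real_inner_smul_left, real_inner_smul_right, horth i j hij]
      ring
    · rw [span_smul_eq' u _ (fun i => (div_pos hρ (hupos i)).ne'), hspanu, hspan]
    · intro i
      obtain ⟨hvlo, hvhi⟩ := hnorm i
      have h1 : v i - (ρ / ‖u i‖) • u i = (v i - u i) + (u i - (ρ / ‖u i‖) • u i) := by abel
      have h2 : ‖u i - (ρ / ‖u i‖) • u i‖ = |‖u i‖ - ρ| := by
        have : u i - (ρ / ‖u i‖) • u i = (1 - ρ / ‖u i‖) • u i := by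
          rw [sub_smul, one_smul]
        rw [this, norm_smul, Real.norm_eq_abs]
        rw [show (1 : ℝ) - ρ / ‖u i‖ = (‖u i‖ - ρ) / ‖u i‖ by
          rw [sub_div, div_self (hupos i).ne']]
        rw [abs_div, abs_of_pos (hupos i), div_mul_cancel₀ _ (hupos i).ne']
      have habs' := abs_le.1 ((abs_norm_sub_norm_le (u i) (v i)).trans (hclose i))
      have h3 : |‖u i‖ - ρ| ≤ B ^ m * δ * ρ + ε * ρ := by
        rw [abs_le]
        constructor <;> nlinarith
      calc ‖v i - (ρ / ‖u i‖) • u i‖ ≤ ‖v i - u i‖ + ‖u i - (ρ / ‖u i‖) • u i‖ := by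
            rw [h1]; exact norm_add_le _ _
        _ ≤ B ^ m * δ * ρ + (B ^ m * δ * ρ + ε * ρ) := by
            rw [h2, ← norm_neg (v i - u i), neg_sub]
            exact add_le_add (hclose i) h3
        _ ≤ (ε + 10 * B ^ m * δ) * ρ := by nlinarith
  · -- large δ: any ortho-ρ-normal basis works
    push_neg at hcase
    have hfr : Module.finrank ℝ V = m := by
      rw [← hspan, finrank_span_eq_card hli, Fintype.card_fin]
    let b := (stdOrthonormalBasis ℝ V).reindex (finCongr hfr)
    refine ⟨fun i => ρ • ((b i : E n)), ?_, ?_, ?_, ?_⟩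
    · intro i
      rw [norm_smul, Real.norm_eq_abs, abs_of_pos hρ]
      have : ‖(b i : E n)‖ = ‖b i‖ := rfl
      rw [this, b.orthonormal.1 i, mul_one]
    · intro i j hij
      rw [real_inner_smul_left, real_inner_smul_right]
      have : (inner ℝ ((b i : E n)) ((b j : E n)) : ℝ) = (inner ℝ (b i) (b j) : ℝ) :=
        (Submodule.coe_inner V (b i) (b j)).symm
      rw [this, b.orthonormal.2 hij]
      ring
    · rw [span_smul_eq' (fun i => (b i : E n)) (fun _ => ρ) (fun _ => hρ.ne')]
      have h1 : Set.range (fun i => (b i : E n)) = V.subtype '' Set.range b := by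
        rw [← Set.range_comp]; rfl
      rw [h1, ← Submodule.map_span, ← b.coe_toBasis, b.toBasis.span_eq, Submodule.map_top,
        Submodule.range_subtype]
    · intro i
      obtain ⟨hvlo, hvhi⟩ := hnorm i
      have hb : ‖ρ • ((b i : E n))‖ = ρ := by
        rw [norm_smul, Real.norm_eq_abs, abs_of_pos hρ]
        have : ‖(b i : E n)‖ = ‖b i‖ := rfl
        rw [this, b.orthonormal.1 i, mul_one]
      have hKδ : 10 * B ^ m * δ ≥ 10 / 4 := by
        rw [ge_iff_le, div_le_iff₀ (by norm_num : (0:ℝ) < 4)]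
        nlinarith
      calc ‖v i - ρ • ((b i : E n))‖ ≤ ‖v i‖ + ‖ρ • ((b i : E n))‖ := norm_sub_le _ _
        _ ≤ (1 + ε) * ρ + ρ := by rw [hb]; linarith
        _ ≤ (ε + 10 * B ^ m * δ) * ρ := by nlinarith

end
end

section
/- Let T = conv(x_0,...,x_{m+1}) be an (m+1)-simplex in R^n with diam(T) ≤ d and h_min(T) ≥ ηd for some η ∈ [0,1] and d > 0. If x̄_0 ∈ R^n satisfies |x_0 − x̄_0| ≤ (η²/8)d, then the simplex T̄ = conv(x̄_0, x_1,...,x_{m+1}) satisfies diam(T̄) ≤ (9/8)d and h_min(T̄) ≥ (1/2)ηd. -/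
open MeasureTheory Metric Set
open scoped ENNReal

noncomputable section

/-- The `j`-th height of the simplex with vertices `x 0, …, x (m+1)`. -/
noncomputable def height {n m : ℕ} (x : Fin (m+2) → E n) (j : Fin (m+2)) : ℝ :=
  Metric.infDist (x j) (affineSpan ℝ (x '' {i | i ≠ j}) : Set (E n))

/-- The minimal height of the simplex with vertices `x 0, …, x (m+1)`. -/
noncomputable def minHeight {n m : ℕ} (x : Fin (m+2) → E n) : ℝ := ⨅ j, height x j

private lemma le_infDist_aux {α : Type*} [MetricSpace α] {s : Set α} {x : α} {b : ℝ}
    (hs : s.Nonempty) (h : ∀ y ∈ s, b ≤ dist x y) : b ≤ Metric.infDist x s := by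
  by_contra hlt
  obtain ⟨y, hy, hdy⟩ := (Metric.infDist_lt_iff hs).1 (not_le.1 hlt)
  exact absurd (h y hy) (not_le.2 hdy)

set_option maxHeartbeats 1000000 in
/-- Perturbation of voluminous simplices: if `T = conv(x 0,…,x (m+1))` satisfies
`diam T ≤ d` and `h_min(T) ≥ η d` with `η ∈ [0,1]`, `d > 0`, and `‖x 0 − x̄₀‖ ≤ (η²/8) d`,
then the simplex `T̄` obtained by replacing `x 0` with `x̄₀` satisfies `diam T̄ ≤ (9/8) d`
and `h_min(T̄) ≥ (1/2) η d`. -/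
theorem perturbed_voluminous_simplex (n m : ℕ) (x : Fin (m+2) → E n) (η d : ℝ)
    (hη : η ∈ Set.Icc (0:ℝ) 1) (hd : 0 < d)
    (hdiam : Metric.diam (convexHull ℝ (Set.range x)) ≤ d)
    (hmin : η * d ≤ minHeight x)
    (xb : E n) (hxb : ‖x 0 - xb‖ ≤ η ^ 2 / 8 * d) :
    Metric.diam (convexHull ℝ (Set.range (Function.update x 0 xb))) ≤ 9/8 * d ∧
    1/2 * η * d ≤ minHeight (Function.update x 0 xb) := by
  obtain ⟨hη0, hη1⟩ := hη
  set x' := Function.update x 0 xb with hx'def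
  have hx'0 : x' 0 = xb := by simp [hx'def]
  have hx'ne : ∀ i : Fin (m+2), i ≠ 0 → x' i = x i := fun i h => by
    simp [hx'def, Function.update_of_ne h]
  -- diameter of the original vertex set
  have hdiam0 : Metric.diam (Set.range x) ≤ d := by
    rw [← convexHull_diam]; exact hdiam
  have hbd : Bornology.IsBounded (Set.range x) := (Set.finite_range x).isBounded
  have hdxy : ∀ i i' : Fin (m+2), dist (x i) (x i') ≤ d := fun i i' =>
    (Metric.dist_le_diam_of_mem hbd ⟨i, rfl⟩ ⟨i', rfl⟩).trans hdiam0
  have hdist0b : dist (x 0) xb ≤ η ^ 2 / 8 * d := by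
    rw [dist_eq_norm]; exact hxb
  have hη2 : η ^ 2 ≤ 1 := by nlinarith
  have hεd : η ^ 2 / 8 * d ≤ d / 8 := by nlinarith
  have hησ : η ^ 2 / 8 * d ≤ η * d / 2 := by
    nlinarith [mul_nonneg (by linarith : (0:ℝ) ≤ 4 - η) (mul_nonneg hη0 hd.le)]
  have hηd : η * d ≤ d := mul_le_of_le_one_left hd.le hη1
  have hηd0 : 0 ≤ η * d := mul_nonneg hη0 hd.le
  -- each original height is at least η d
  have hj : ∀ j, η * d ≤ height x j := fun j =>
    hmin.trans (ciInf_le (Finite.bddBelow_range _) j)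
  constructor
  · -- diameter bound
    rw [convexHull_diam]
    apply Metric.diam_le_of_forall_dist_le (by linarith)
    rintro _ ⟨i, rfl⟩ _ ⟨i', rfl⟩
    by_cases hi : i = 0 <;> by_cases hi' : i' = 0
    · subst hi; subst hi'; simp only [dist_self]; positivity
    · subst hi
      rw [hx'0, hx'ne i' hi']
      calc dist xb (x i') ≤ dist xb (x 0) + dist (x 0) (x i') := dist_triangle _ _ _
        _ ≤ η ^ 2 / 8 * d + d := by rw [dist_comm]; exact add_le_add hdist0b (hdxy 0 i')
        _ ≤ 9/8 * d := by linarith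
    · subst hi'
      rw [hx'0, hx'ne i hi]
      calc dist (x i) xb ≤ dist (x i) (x 0) + dist (x 0) xb := dist_triangle _ _ _
        _ ≤ d + η ^ 2 / 8 * d := add_le_add (hdxy i 0) hdist0b
        _ ≤ 9/8 * d := by linarith
    · rw [hx'ne i hi, hx'ne i' hi']
      exact (hdxy i i').trans (by linarith)
  · -- minimal height bound
    have key : ∀ j, 1/2 * η * d ≤ height x' j := by
      intro j
      rcases eq_or_lt_of_le hη0 with h0 | hηpos
      · rw [← h0, show (1:ℝ)/2 * 0 * d = 0 by ring]
        exact Metric.infDist_nonneg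
      by_cases hj0 : j = 0
      · -- perturbed vertex: the opposite face is unchanged
        subst hj0
        have hset : x' '' {i | i ≠ 0} = x '' {i | i ≠ 0} :=
          Set.image_congr fun i hi => hx'ne i hi
        unfold height
        rw [hset, hx'0]
        have h1 : Metric.infDist (x 0) (affineSpan ℝ (x '' {i | i ≠ 0}) : Set (E n)) ≤
            Metric.infDist xb (affineSpan ℝ (x '' {i | i ≠ 0}) : Set (E n)) + dist (x 0) xb :=
          Metric.infDist_le_infDist_add_dist
        have h2 := hj 0
        unfold height at h2
        linarith
      · -- unperturbed vertex `x j`, `j ≠ 0`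
        have h0j : (0 : Fin (m+2)) ≠ j := fun h => hj0 h.symm
        set S : Set (E n) := x '' {i | i ≠ 0 ∧ i ≠ j} with hSdef
        have hset : x' '' {i | i ≠ j} = insert xb S := by
          ext y
          constructor
          · rintro ⟨i, hi, rfl⟩
            by_cases h0 : i = 0
            · subst h0; rw [hx'0]; exact Set.mem_insert _ _
            · exact Set.mem_insert_of_mem _ ⟨i, ⟨h0, hi⟩, (hx'ne i h0).symm ▸ rfl⟩
          · rintro (rfl | ⟨i, ⟨h0, hij⟩, rfl⟩)
            · exact ⟨0, h0j, hx'0⟩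
            · exact ⟨i, hij, hx'ne i h0⟩
        have hSsub : S ⊆ x '' {i | i ≠ j} := fun y ⟨i, hi, h⟩ => ⟨i, hi.2, h⟩
        have hxjS : η * d ≤ Metric.infDist (x j) (affineSpan ℝ (x '' {i | i ≠ j}) : Set (E n)) :=
          hj j
        unfold height
        rw [hset, hx'ne j hj0]
        rcases S.eq_empty_or_nonempty with hS | ⟨p, hp⟩
        · -- degenerate case: only one other vertex
          rw [hS, insert_empty_eq]
          apply le_infDist_aux (s := (affineSpan ℝ ({xb} : Set (E n)) : Set (E n)))
            ⟨xb, subset_affineSpan ℝ _ (Set.mem_singleton xb)⟩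
          intro y hy
          have hyx : y = xb := (AffineSubspace.mem_affineSpan_singleton _ _).1 hy
          rw [hyx]
          have h1 : dist (x j) (x 0) ≤ dist (x j) xb + dist xb (x 0) := dist_triangle _ _ _
          have h2 : Metric.infDist (x j) (affineSpan ℝ (x '' {i | i ≠ j}) : Set (E n)) ≤
              dist (x j) (x 0) :=
            Metric.infDist_le_dist_of_mem (subset_affineSpan ℝ _ ⟨0, h0j, rfl⟩)
          rw [dist_comm xb (x 0)] at h1
          linarith
        · obtain ⟨k, ⟨hk0, hkj⟩, rfl⟩ := hp
          set B := affineSpan ℝ S with hBdef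
          have hkB : x k ∈ B := subset_affineSpan ℝ _ ⟨k, ⟨hk0, hkj⟩, rfl⟩
          have hBne : (B : Set (E n)).Nonempty := ⟨x k, hkB⟩
          -- xb is far from B
          have hSsub0 : S ⊆ x '' {i | i ≠ 0} := fun y ⟨i, hi, h⟩ => ⟨i, hi.1, h⟩
          have hB0 : η * d ≤ Metric.infDist (x 0) (B : Set (E n)) := by
            refine (hj 0).trans (Metric.infDist_le_infDist_of_subset ?_ hBne)
            exact affineSpan_mono ℝ hSsub0
          have hxbB : η * d - η ^ 2 / 8 * d ≤ Metric.infDist xb (B : Set (E n)) := by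
            have := Metric.infDist_le_infDist_add_dist (x := x 0) (y := xb)
              (s := (B : Set (E n)))
            linarith
          apply le_infDist_aux ⟨xb, subset_affineSpan ℝ _ (Set.mem_insert _ _)⟩
          intro y hy
          rw [SetLike.mem_coe, ← affineSpan_insert_affineSpan] at hy
          obtain ⟨r, q, hq, rfl⟩ := (AffineSubspace.mem_affineSpan_insert_iff hkB xb _).1 hy
          by_cases hr : |r| ≤ 4 / η
          · -- small coefficient: compare with the unperturbed point
            set y' : E n := r • (x 0 -ᵥ x k) +ᵥ q with hy'def
            have hy'mem : y' ∈ affineSpan ℝ (x '' {i | i ≠ j}) := by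
              refine AffineSubspace.smul_vsub_vadd_mem _ r ?_ ?_ ?_
              · exact subset_affineSpan ℝ _ ⟨0, h0j, rfl⟩
              · exact subset_affineSpan ℝ _ ⟨k, hkj, rfl⟩
              · exact affineSpan_mono ℝ hSsub hq
            have hdy' : η * d ≤ dist (x j) y' :=
              hxjS.trans (Metric.infDist_le_dist_of_mem hy'mem)
            have hyy' : dist (r • (xb -ᵥ x k) +ᵥ q) y' = |r| * ‖x 0 - xb‖ := by
              rw [hy'def, dist_eq_norm]
              have : (r • (xb -ᵥ x k) +ᵥ q) - (r • (x 0 -ᵥ x k) +ᵥ q)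
                  = r • (xb - x 0) := by
                simp only [vsub_eq_sub, vadd_eq_add]
                module
              rw [this, norm_smul, Real.norm_eq_abs, norm_sub_rev]
            have htri : dist (x j) y' ≤ dist (x j) (r • (xb -ᵥ x k) +ᵥ q)
                + dist (r • (xb -ᵥ x k) +ᵥ q) y' := dist_triangle _ _ _
            have habs : |r| * ‖x 0 - xb‖ ≤ (4 / η) * (η ^ 2 / 8 * d) := by
              apply mul_le_mul hr hxb (norm_nonneg _)
              positivity
            have hηne : η ≠ 0 := ne_of_gt hηpos
            have : (4 / η) * (η ^ 2 / 8 * d) = η * d / 2 := by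
              field_simp
              ring
            rw [hyy'] at htri
            linarith
          · -- large coefficient: far from the base span
            push_neg at hr
            have hη4 : (0:ℝ) < 4 / η := by positivity
            have hrne : r ≠ 0 := by
              intro h; rw [h, abs_zero] at hr; linarith
            have hηne : η ≠ 0 := ne_of_gt hηpos
            have hbase : 0 ≤ η * d - η ^ 2 / 8 * d := by linarith
            have hwmem : (r⁻¹ • ((x k : E n) -ᵥ q) +ᵥ x k) ∈ B :=
              AffineSubspace.smul_vsub_vadd_mem _ _ hkB hq hkB
            have hyk : dist (r • (xb -ᵥ x k) +ᵥ q) (x k)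
                = |r| * dist xb (r⁻¹ • ((x k : E n) -ᵥ q) +ᵥ x k) := by
              rw [dist_eq_norm, dist_eq_norm]
              have heq : (r • (xb -ᵥ x k) +ᵥ q) - x k
                  = r • (xb - (r⁻¹ • ((x k : E n) -ᵥ q) +ᵥ x k)) := by
                simp only [vsub_eq_sub, vadd_eq_add, smul_sub, smul_add, smul_smul,
                  mul_inv_cancel₀ hrne, one_smul]
                module
              rw [heq, norm_smul, Real.norm_eq_abs]
            have hwfar : η * d - η ^ 2 / 8 * d ≤ dist xb (r⁻¹ • ((x k : E n) -ᵥ q) +ᵥ x k) :=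
              hxbB.trans (Metric.infDist_le_dist_of_mem hwmem)
            have htri : dist (r • (xb -ᵥ x k) +ᵥ q) (x k) ≤
                dist (r • (xb -ᵥ x k) +ᵥ q) (x j) + dist (x j) (x k) :=
              dist_triangle _ _ _
            have hjk : dist (x j) (x k) ≤ d := hdxy j k
            have hfar : |r| * (η * d - η ^ 2 / 8 * d) ≤ dist (r • (xb -ᵥ x k) +ᵥ q) (x k) := by
              rw [hyk]
              apply mul_le_mul_of_nonneg_left hwfar (abs_nonneg r)
            have hA : (4 / η) * (η * d - η ^ 2 / 8 * d) ≤ |r| * (η * d - η ^ 2 / 8 * d) :=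
              mul_le_mul_of_nonneg_right hr.le hbase
            have hB : (4 / η) * (η * d - η ^ 2 / 8 * d) = 4 * d - η * d / 2 := by
              field_simp
              ring
            rw [dist_comm]
            linarith
    exact le_ciInf key
end
end

section
/- Let Σ ⊂ R^n be compact, Ahlfors regular with H^m(Σ ∩ B(x,r)) ≥ A_Σ r^m for all x ∈ Σ and r ≤ diam Σ, and assume the global tangent-point curvature K_tp (with respect to some map H : Σ → G(n,m)) satisfies ∫_Σ K_tp(z)^p dH^m(z) ≤ E for some p > m. Then for all x ∈ Σ and r ∈ (0, diam Σ], β_Σ(x,r) ≤ C (E/A_Σ)^{κ/(p−m)} r^{κ} with κ = (p−m)/(p+m) and an absolute constant C (one may take C = 4). -/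
open MeasureTheory Metric Set
open scoped ENNReal

noncomputable section

/-- The beta number `β_A(x,r)` with respect to `m`-planes. -/
noncomputable def betaNum {n : ℕ} (m : ℕ) (A : Set (E n)) (x : E n) (r : ℝ) : ℝ :=
  r⁻¹ * ⨅ H : {H : Submodule ℝ (E n) // Module.finrank ℝ H = m},
      ⨆ z ∈ A ∩ Metric.ball x r, Metric.infDist z ((fun v => x + v) '' (H.1 : Set (E n)))

/-- The global tangent-point curvature of `A` at `x`, with respect to the plane field `T`:
`K_tp(x) = sup_{y ∈ A} 2 dist(y, x + T x) / |y − x|²` (valued in `[0,∞]`). -/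
noncomputable def Ktp {n : ℕ} (T : E n → Submodule ℝ (E n)) (A : Set (E n)) (x : E n) : ℝ≥0∞ :=
  ⨆ y ∈ A, ENNReal.ofReal
    (2 * Metric.infDist y ((fun v => x + v) '' ((T x) : Set (E n))) / ‖y - x‖ ^ 2)

/-- Distance to a translated set equals distance of the translated point. -/
lemma infDist_add_image {n : ℕ} (H : Set (E n)) (x y : E n) :
    Metric.infDist y ((fun v => x + v) '' H) = Metric.infDist (y - x) H := by
  have hiso : Isometry (fun v : E n => x + v) := Isometry.of_dist_eq (by simp [dist_eq_norm])
  have h := Metric.infDist_image (x := y - x) (t := H) hiso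
  simpa using h

/-- Core quantitative estimate, for a strict energy bound by a positive number. -/
lemma beta_core {n m : ℕ} {p Areg E' : ℝ} {A : Set (E n)} {T : E n → Submodule ℝ (E n)}
    (hA : IsCompact A) (hm : (m : ℝ) < p) (hAreg : 0 < Areg) (hE' : 0 < E')
    (hTrk : ∀ x ∈ A, Module.finrank ℝ (T x) = m)
    (hreg : ∀ x ∈ A, ∀ r : ℝ, 0 < r → r ≤ Metric.diam A →
      ENNReal.ofReal (Areg * r ^ m) ≤ μH[(m:ℝ)] (A ∩ Metric.ball x r))
    (hint : (∫⁻ z in A, (Ktp T A z) ^ p ∂μH[(m:ℝ)]) < ENNReal.ofReal E')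
    {x : E n} (hx : x ∈ A) {r : ℝ} (hr : 0 < r) (hrd : r ≤ Metric.diam A) :
    betaNum m A x r ≤ 3 * (E' / Areg) ^ (1 / (p + m)) * r ^ ((p - m) / (p + m)) := by
  have hm0 : (0:ℝ) ≤ m := Nat.cast_nonneg m
  have hp : 0 < p := lt_of_le_of_lt hm0 hm
  have hpm : 0 < p + m := by linarith
  set Q : ℝ := E' / Areg with hQdef
  have hQ : 0 < Q := div_pos hE' hAreg
  set ρ : ℝ := Q ^ (1 / (p + m)) * r ^ (2 * p / (p + m)) with hρdef
  have hρ : 0 < ρ := mul_pos (Real.rpow_pos_of_pos hQ _) (Real.rpow_pos_of_pos hr _)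
  -- the target equals `r⁻¹ * (3 * ρ)`
  have htarget : 3 * Q ^ (1 / (p + m)) * r ^ ((p - m) / (p + m)) = r⁻¹ * (3 * ρ) := by
    have h1 : r ^ ((p - m) / (p + m)) = r ^ (2 * p / (p + m)) / r := by
      have he : (p - m) / (p + m) = 2 * p / (p + m) - 1 := by
        field_simp
        ring
      rw [he, Real.rpow_sub hr, Real.rpow_one]
    rw [h1, hρdef]
    field_simp
  rw [htarget]
  -- reduce to bounding the infimum by `3 * ρ`
  have hbdd : BddBelow (Set.range fun H : {H : Submodule ℝ (E n) // Module.finrank ℝ H = m} =>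
      ⨆ z ∈ A ∩ Metric.ball x r, Metric.infDist z ((fun v => x + v) '' (H.1 : Set (E n)))) := by
    refine ⟨0, ?_⟩
    rintro _ ⟨H, rfl⟩
    exact Real.iSup_nonneg fun z => Real.iSup_nonneg fun _ => Metric.infDist_nonneg
  have h3ρ : (0:ℝ) ≤ 3 * ρ := by positivity
  suffices hsuf : (⨅ H : {H : Submodule ℝ (E n) // Module.finrank ℝ H = m},
      ⨆ z ∈ A ∩ Metric.ball x r, Metric.infDist z ((fun v => x + v) '' (H.1 : Set (E n))))
      ≤ 3 * ρ by
    have := mul_le_mul_of_nonneg_left hsuf (inv_nonneg.2 hr.le)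
    exact this
  rcases le_or_gt r ρ with hcase | hcase
  · -- trivial case: the plane through `x` already works
    refine le_trans (ciInf_le hbdd ⟨T x, hTrk x hx⟩) ?_
    refine Real.iSup_le (fun z => Real.iSup_le (fun hz => ?_) h3ρ) h3ρ
    have hmem : x ∈ (fun v => x + v) '' ((T x : Submodule ℝ (E n)) : Set (E n)) :=
      ⟨0, Submodule.zero_mem _, by simp⟩
    have h1 : Metric.infDist z ((fun v => x + v) '' ((T x : Submodule ℝ (E n)) : Set (E n)))
        ≤ dist z x := Metric.infDist_le_dist_of_mem hmem
    have h2 : dist z x < r := by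
      have := hz.2
      simpa [Metric.mem_ball] using this
    linarith
  · -- main case: find a good point `w` in `A ∩ ball x ρ`
    have hρd : ρ ≤ Metric.diam A := hcase.le.trans hrd
    have hμ := hreg x hx ρ hρ hρd
    have hsmeas : MeasurableSet (A ∩ Metric.ball x ρ) :=
      (hA.isClosed.measurableSet).inter measurableSet_ball
    have hAρ : 0 < Areg * ρ ^ m := by positivity
    set c : ℝ≥0∞ := ENNReal.ofReal (E' / (Areg * ρ ^ m)) with hcdef
    have hgood : ∃ w ∈ A ∩ Metric.ball x ρ, Ktp T A w ^ p ≤ c := by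
      by_contra hcon
      push_neg at hcon
      have hge : ENNReal.ofReal E' ≤ ∫⁻ z in A, (Ktp T A z) ^ p ∂μH[(m:ℝ)] := by
        calc ENNReal.ofReal E' = c * ENNReal.ofReal (Areg * ρ ^ m) := by
              rw [hcdef, ← ENNReal.ofReal_mul (by positivity)]
              rw [div_mul_cancel₀ _ hAρ.ne']
          _ ≤ c * μH[(m:ℝ)] (A ∩ Metric.ball x ρ) := mul_le_mul_right hμ c
          _ = ∫⁻ _ in A ∩ Metric.ball x ρ, c ∂μH[(m:ℝ)] := (setLIntegral_const _ c).symm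
          _ ≤ ∫⁻ z in A ∩ Metric.ball x ρ, (Ktp T A z) ^ p ∂μH[(m:ℝ)] :=
              lintegral_mono_ae ((ae_restrict_mem hsmeas).mono fun z hz => (hcon z hz).le)
          _ ≤ ∫⁻ z in A, (Ktp T A z) ^ p ∂μH[(m:ℝ)] :=
              lintegral_mono' (Measure.restrict_mono inter_subset_left le_rfl) le_rfl
      exact absurd hint (not_lt.2 hge)
    obtain ⟨w, hw, hwK⟩ := hgood
    set k : ℝ := (E' / (Areg * ρ ^ m)) ^ p⁻¹ with hkdef
    have hkpos : 0 < k := Real.rpow_pos_of_pos (div_pos hE' hAρ) _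
    have hKw : Ktp T A w ≤ ENNReal.ofReal k := by
      have h1 := ENNReal.rpow_le_rpow hwK (inv_nonneg.2 hp.le)
      rwa [← ENNReal.rpow_mul, mul_inv_cancel₀ hp.ne', ENNReal.rpow_one, hcdef,
        ENNReal.ofReal_rpow_of_pos (div_pos hE' hAρ)] at h1
    -- the pointwise tangent-point estimate at `w`
    have hd : ∀ y ∈ A, Metric.infDist y ((fun v => w + v) '' ((T w : Submodule ℝ (E n)) : Set (E n)))
        ≤ k * ‖y - w‖ ^ 2 / 2 := by
      intro y hy
      by_cases hyw : y = w
      · subst hyw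
        have : Metric.infDist y ((fun v => y + v) '' ((T y : Submodule ℝ (E n)) : Set (E n))) = 0 :=
          Metric.infDist_zero_of_mem ⟨0, Submodule.zero_mem _, by simp⟩
        rw [this]
        have h0 : (0:ℝ) ≤ ‖(y:E n) - y‖ ^ 2 := sq_nonneg _
        have h1 := mul_nonneg hkpos.le h0
        linarith
      · have h1 : ENNReal.ofReal
            (2 * Metric.infDist y ((fun v => w + v) '' ((T w : Submodule ℝ (E n)) : Set (E n)))
              / ‖y - w‖ ^ 2) ≤ Ktp T A w := by
          exact le_iSup₂ (f := fun y (_ : y ∈ A) => ENNReal.ofReal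
            (2 * Metric.infDist y ((fun v => w + v) '' ((T w : Submodule ℝ (E n)) : Set (E n)))
              / ‖y - w‖ ^ 2)) y hy
        have h2 := (h1.trans hKw)
        rw [ENNReal.ofReal_le_ofReal_iff hkpos.le] at h2
        have hq : (0:ℝ) < ‖y - w‖ ^ 2 := by
          have hn : (0:ℝ) < ‖y - w‖ := norm_pos_iff.mpr (sub_ne_zero.mpr hyw)
          exact pow_pos hn 2
        rw [div_le_iff₀ hq] at h2
        linarith
    -- the key algebraic identity: `k = ρ / r²`
    have hkey : k = ρ / r ^ 2 := by
      have hρr2 : (0:ℝ) < ρ / r ^ 2 := by positivity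
      have heq : E' / (Areg * ρ ^ m) = (ρ / r ^ 2) ^ p := by
        have hlog : Real.log (E' / (Areg * ρ ^ m)) = Real.log ((ρ / r ^ 2) ^ p) := by
          have hlρ : Real.log ρ = (1 / (p + m)) * (Real.log E' - Real.log Areg)
              + (2 * p / (p + m)) * Real.log r := by
            rw [hρdef, Real.log_mul (Real.rpow_pos_of_pos hQ _).ne' (Real.rpow_pos_of_pos hr _).ne',
              Real.log_rpow hQ, Real.log_rpow hr, hQdef, Real.log_div hE'.ne' hAreg.ne']
          have hr2 : (0:ℝ) < r ^ 2 := by positivity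
          have hρm : (0:ℝ) < ρ ^ m := by positivity
          rw [Real.log_rpow hρr2, Real.log_div hρ.ne' hr2.ne',
            Real.log_div hE'.ne' hAρ.ne', Real.log_mul hAreg.ne' hρm.ne',
            Real.log_pow, Real.log_pow, hlρ]
          field_simp
          ring
        have h1 : E' / (Areg * ρ ^ m) ∈ Set.Ioi (0:ℝ) := div_pos hE' hAρ
        have h2 : (ρ / r ^ 2) ^ p ∈ Set.Ioi (0:ℝ) := Real.rpow_pos_of_pos hρr2 _
        exact Real.log_injOn_pos h1 h2 hlog
      rw [hkdef, heq, Real.rpow_rpow_inv hρr2.le hp.ne']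
    have hkr : k * r ^ 2 = ρ := by
      rw [hkey, div_mul_cancel₀]
      positivity
    -- use the plane `T w`
    refine le_trans (ciInf_le hbdd ⟨T w, hTrk w hw.1⟩) ?_
    refine Real.iSup_le (fun y => Real.iSup_le (fun hy => ?_) h3ρ) h3ρ
    have hyx : dist y x < r := by simpa [Metric.mem_ball] using hy.2
    have hwx : dist w x < ρ := by simpa [Metric.mem_ball] using hw.2
    have hyw2r : ‖y - w‖ ≤ 2 * r := by
      have h1 : dist y w ≤ dist y x + dist x w := dist_triangle y x w
      have h2 : dist x w < ρ := by rw [dist_comm]; exact hwx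
      have h3 : dist y w ≤ 2 * r := by linarith
      simpa [dist_eq_norm] using h3
    calc Metric.infDist y ((fun v => x + v) '' ((T w : Submodule ℝ (E n)) : Set (E n)))
        = Metric.infDist (y - x) ((T w : Submodule ℝ (E n)) : Set (E n)) :=
          infDist_add_image _ _ _
      _ ≤ Metric.infDist (y - w) ((T w : Submodule ℝ (E n)) : Set (E n))
            + dist (y - x) (y - w) := Metric.infDist_le_infDist_add_dist
      _ = Metric.infDist y ((fun v => w + v) '' ((T w : Submodule ℝ (E n)) : Set (E n)))
            + dist w x := by
          rw [infDist_add_image]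
          congr 1
          rw [dist_eq_norm, dist_eq_norm, show (y - x) - (y - w) = w - x from by abel]
      _ ≤ k * ‖y - w‖ ^ 2 / 2 + ρ := by
          have := hd y hy.1
          linarith [hwx]
      _ ≤ k * (2 * r) ^ 2 / 2 + ρ := by
          have h1 : ‖y - w‖ ^ 2 ≤ (2 * r) ^ 2 := by
            apply pow_le_pow_left₀ (norm_nonneg _) hyw2r
          nlinarith [hkpos.le]
      _ = 2 * (k * r ^ 2) + ρ := by ring
      _ = 3 * ρ := by rw [hkr]; ring

/-- Decay of beta numbers from `p`-integrable global tangent-point curvature: there is an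
absolute constant `C` such that for every compact Ahlfors regular set `A ⊂ ℝⁿ` (with
constant `A_Σ`) whose global tangent-point curvature (w.r.t. some plane field `T`)
satisfies `∫_A K_tp^p dH^m ≤ E₀` for some `p > m`, one has
`β_A(x,r) ≤ C (E₀/A_Σ)^{κ/(p−m)} r^κ` with `κ = (p−m)/(p+m)`,
for all `x ∈ A` and `r ∈ (0, diam A]`. -/
theorem beta_decay_tangent_point :
    ∃ C : ℝ, 0 < C ∧
      ∀ (n m : ℕ) (p Areg E₀ : ℝ) (A : Set (E n)) (T : E n → Submodule ℝ (E n)),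
        IsCompact A → (m : ℝ) < p → 0 < Areg → 0 ≤ E₀ →
        (∀ x ∈ A, Module.finrank ℝ (T x) = m) →
        (∀ x ∈ A, ∀ r : ℝ, 0 < r → r ≤ Metric.diam A →
          ENNReal.ofReal (Areg * r ^ m) ≤ μH[(m:ℝ)] (A ∩ Metric.ball x r)) →
        (∫⁻ z in A, (Ktp T A z) ^ p ∂μH[(m:ℝ)]) ≤ ENNReal.ofReal E₀ →
        ∀ x ∈ A, ∀ r : ℝ, 0 < r → r ≤ Metric.diam A →
          betaNum m A x r ≤
            C * (E₀ / Areg) ^ (((p - m) / (p + m)) / (p - m)) * r ^ ((p - m) / (p + m)) := by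
  refine ⟨3, by norm_num, ?_⟩
  intro n m p Areg E₀ A T hA hm hAreg hE₀ hTrk hreg hint x hx r hr hrd
  have hm0 : (0:ℝ) ≤ m := Nat.cast_nonneg m
  have hp : 0 < p := lt_of_le_of_lt hm0 hm
  have hpm : 0 < p + m := by linarith
  have hpm' : (0:ℝ) < p - m := by linarith
  have hexp : ((p - m) / (p + m)) / (p - m) = 1 / (p + m) := by
    field_simp
  rw [hexp]
  -- limit argument: apply the core lemma with `E' > E₀` and let `E' → E₀⁺`
  have hcont : ContinuousAt (fun e : ℝ => 3 * (e / Areg) ^ (1 / (p + m))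
      * r ^ ((p - m) / (p + m))) E₀ := by
    have h1 : ContinuousAt (fun e : ℝ => (e / Areg) ^ (1 / (p + m))) E₀ := by
      exact ContinuousAt.comp (g := fun y : ℝ => y ^ (1 / (p + (m:ℝ))))
        (f := fun e : ℝ => e / Areg)
        (Real.continuousAt_rpow_const _ _ (Or.inr (by positivity)))
        ((continuous_id.div_const Areg).continuousAt)
    exact ((h1.const_mul 3).mul_const _)
  have htend : Filter.Tendsto (fun e : ℝ => 3 * (e / Areg) ^ (1 / (p + m))
      * r ^ ((p - m) / (p + m))) (nhdsWithin E₀ (Set.Ioi E₀))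
      (nhds (3 * (E₀ / Areg) ^ (1 / (p + m)) * r ^ ((p - m) / (p + m)))) :=
    hcont.tendsto.mono_left nhdsWithin_le_nhds
  refine ge_of_tendsto htend ?_
  apply eventually_nhdsWithin_of_forall
  intro e he
  have he0 : 0 < e := lt_of_le_of_lt hE₀ he
  have hint' : (∫⁻ z in A, (Ktp T A z) ^ p ∂μH[(m:ℝ)]) < ENNReal.ofReal e :=
    lt_of_le_of_lt hint ((ENNReal.ofReal_lt_ofReal_iff he0).2 he)
  exact beta_core hA hm hAreg he0 hTrk hreg hint' hx hr hrd

end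
end
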